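/- Let x ∈ S_J (‖x‖_J = 1), let {Iᵢ}_{i∈F} be an x-norming family, and set bᵢ = ∑_{n∈Iᵢ} x(n). Then for every strictly increasing sequence (kᵢ)_{i∈F} in ℕ, the vector y = ∑_{i∈F} bᵢ e_{kᵢ} is an extreme point of B_J. -/

import Mathlib

open Filter Topology Classical

noncomputable section

/-- Admissible finite families of pairwise disjoint, increasingly ordered intervals
`[f i .1, f i .2]` of `ℕ`. -/
def Admissible (n : ℕ) (f : Fin n → ℕ × ℕ) : Prop :=
  (∀ i, (f i).1 ≤ (f i).2) ∧ ∀ i j : Fin n, i < j → (f i).2 < (f j).1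

/-- The set of estimates appearing in the definition of the James norm. -/
def estimates (x : ℕ → ℝ) : Set ℝ :=
  {r | ∃ n, ∃ f : Fin n → ℕ × ℕ, Admissible n f ∧
    r = Real.sqrt (∑ i, (∑ k ∈ Finset.Icc (f i).1 (f i).2, x k) ^ 2)}

/-- `x` belongs to the James space `J`. -/
def MemJ (x : ℕ → ℝ) : Prop := BddAbove (estimates x)

/-- The James norm. -/
def jamesNorm (x : ℕ → ℝ) : ℝ := sSup (estimates x)

/-- The ℓ² norm. -/
def l2Norm (x : ℕ → ℝ) : ℝ := Real.sqrt (∑' k, (x k) ^ 2)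

/-- The closed unit ball of the James space. -/
def ballJ : Set (ℕ → ℝ) := {x | MemJ x ∧ jamesNorm x ≤ 1}

/-- The support of a sequence. -/
def supp (x : ℕ → ℝ) : Set ℕ := {n | x n ≠ 0}

/-- The (possibly infinite) sum of `x` over a subset `I` of `ℕ`,
as the limit of the partial sums. -/
def setSum (x : ℕ → ℝ) (I : Set ℕ) : ℝ :=
  limUnder atTop (fun N => ∑ k ∈ Finset.range N, if k ∈ I then x k else 0)

/-- An `x`-norming family: a (finite or infinite) family of pairwise disjoint
nonempty intervals of `ℕ`, indexed by an initial segment `F` of `ℕ`, ordered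
increasingly, whose interval sums exist and realize the James norm of `x`. -/
structure NormingFamily (x : ℕ → ℝ) where
  F : Set ℕ
  F_nonempty : F.Nonempty
  initial : ∀ ⦃m n : ℕ⦄, m ≤ n → n ∈ F → m ∈ F
  I : ℕ → Set ℕ
  I_nonempty : ∀ i ∈ F, (I i).Nonempty
  I_interval : ∀ i ∈ F, (I i).OrdConnected
  ordered : ∀ i ∈ F, ∀ j ∈ F, i < j → ∀ a ∈ I i, ∀ b ∈ I j, a < b
  sums_exist : ∀ i ∈ F, ∃ l : ℝ,
    Tendsto (fun N => ∑ k ∈ Finset.range N, if k ∈ I i then x k else 0) atTop (𝓝 l)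
  norming : ∑' i : F, (setSum x (I i)) ^ 2 = (jamesNorm x) ^ 2

/-- An `x`-norming partition: an `x`-norming family whose intervals cover the
support of `x`, every interval has its minimum in the support, every non-final
interval has its maximum in the support, and the final interval does not extend
beyond the supremum of the support. -/
structure NormingPartition (x : ℕ → ℝ) extends NormingFamily x where
  covers : supp x ⊆ ⋃ i ∈ F, I i
  min_in_supp : ∀ i ∈ F, ∃ m ∈ I i ∩ supp x, ∀ k ∈ I i, m ≤ k
  max_in_supp : ∀ i ∈ F, (∃ j ∈ F, i < j) → ∃ m ∈ I i ∩ supp x, ∀ k ∈ I i, k ≤ m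
  bounded_by_supp : ∀ i ∈ F, ∀ k ∈ I i, ∃ m ∈ supp x, k ≤ m

/-- `n₁ < n₂` are consecutive elements of the support of `x`. -/
def Consecutive (x : ℕ → ℝ) (n₁ n₂ : ℕ) : Prop :=
  n₁ ∈ supp x ∧ n₂ ∈ supp x ∧ n₁ < n₂ ∧ ∀ k, n₁ < k → k < n₂ → x k = 0

end

noncomputable section Lemmas

lemma zero_mem_estimates (x : ℕ → ℝ) : (0:ℝ) ∈ estimates x := by
  refine ⟨0, Fin.elim0, ⟨fun i => i.elim0, fun i => i.elim0⟩, by simp⟩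

lemma jamesNorm_nonneg (x : ℕ → ℝ) (hx : MemJ x) : 0 ≤ jamesNorm x :=
  le_csSup hx (zero_mem_estimates x)

/-- An unordered family of pairwise strongly disjoint intervals gives an estimate. -/
lemma mem_estimates_of_pairwise (x : ℕ → ℝ) (n : ℕ) (f : Fin n → ℕ × ℕ)
    (hle : ∀ i, (f i).1 ≤ (f i).2)
    (hd : ∀ i j, i ≠ j → (f i).2 < (f j).1 ∨ (f j).2 < (f i).1) :
    Real.sqrt (∑ i, (∑ k ∈ Finset.Icc (f i).1 (f i).2, x k) ^ 2) ∈ estimates x := by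
  classical
  set σ := Tuple.sort (fun i => (f i).1) with hσ
  have hmono : Monotone ((fun i => (f i).1) ∘ σ) := Tuple.monotone_sort _
  refine ⟨n, f ∘ σ, ⟨fun i => hle _, ?_⟩, ?_⟩
  · intro i j hij
    have h1 : (f (σ i)).1 ≤ (f (σ j)).1 := hmono hij.le
    have hne : σ i ≠ σ j := fun h => hij.ne (σ.injective h)
    rcases hd _ _ hne with h | h
    · exact h
    · exact absurd h (not_lt.2 (h1.trans (hle (σ j))))
  · congr 1
    exact (Equiv.sum_comp σ (fun i => (∑ k ∈ Finset.Icc (f i).1 (f i).2, x k) ^ 2)).symm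

lemma sum_sq_le_of_pairwise (x : ℕ → ℝ) (hx : MemJ x) (n : ℕ) (f : Fin n → ℕ × ℕ)
    (hle : ∀ i, (f i).1 ≤ (f i).2)
    (hd : ∀ i j, i ≠ j → (f i).2 < (f j).1 ∨ (f j).2 < (f i).1) :
    ∑ i, (∑ k ∈ Finset.Icc (f i).1 (f i).2, x k) ^ 2 ≤ jamesNorm x ^ 2 := by
  have h := le_csSup hx (mem_estimates_of_pairwise x n f hle hd)
  have h0 : (0:ℝ) ≤ ∑ i, (∑ k ∈ Finset.Icc (f i).1 (f i).2, x k) ^ 2 :=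
    Finset.sum_nonneg fun _ _ => sq_nonneg _
  calc ∑ i, (∑ k ∈ Finset.Icc (f i).1 (f i).2, x k) ^ 2
      = Real.sqrt (∑ i, (∑ k ∈ Finset.Icc (f i).1 (f i).2, x k) ^ 2) ^ 2 :=
        (Real.sq_sqrt h0).symm
    _ ≤ jamesNorm x ^ 2 := by
        have := Real.sqrt_nonneg (∑ i, (∑ k ∈ Finset.Icc (f i).1 (f i).2, x k) ^ 2)
        exact pow_le_pow_left₀ this h 2

lemma partial_l2_le (x : ℕ → ℝ) (hx : MemJ x) (N : ℕ) :
    ∑ k ∈ Finset.range N, x k ^ 2 ≤ jamesNorm x ^ 2 := by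
  have := sum_sq_le_of_pairwise x hx N (fun i => ((i:ℕ), (i:ℕ))) (fun i => le_rfl)
    (fun i j hij => by
      rcases lt_or_gt_of_ne (fun h => hij (Fin.ext h) : (i:ℕ) ≠ j) with h | h
      · exact Or.inl h
      · exact Or.inr h)
  rw [← Fin.sum_univ_eq_sum_range (fun k => x k ^ 2) N]
  simpa [Finset.Icc_self] using this

lemma summable_sq (x : ℕ → ℝ) (hx : MemJ x) : Summable (fun k => x k ^ 2) :=
  summable_of_sum_range_le (fun _ => sq_nonneg _) (partial_l2_le x hx)

lemma tsum_sq_le (x : ℕ → ℝ) (hx : MemJ x) : ∑' k, x k ^ 2 ≤ jamesNorm x ^ 2 :=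
  Real.tsum_le_of_sum_range_le (fun _ => sq_nonneg _) (partial_l2_le x hx)

end Lemmas

noncomputable section Aux2

variable (x : ℕ → ℝ) (P : NormingFamily x)

/-- Partial sums over the `i`-th interval. -/
def pS (i N : ℕ) : ℝ := ∑ k ∈ Finset.range N, if k ∈ P.I i then x k else 0

/-- Least element of the `i`-th interval. -/
def mI (i : ℕ) : ℕ := sInf (P.I i)

/-- Greatest element of the `i`-th interval below `N`. -/
def MI (i N : ℕ) : ℕ := sSup (P.I i ∩ Set.Iio N)

variable {x P}

lemma pS_tendsto {i : ℕ} (hi : i ∈ P.F) :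
    Filter.Tendsto (pS x P i) Filter.atTop (𝓝 (setSum x (P.I i))) := by
  obtain ⟨l, hl⟩ := P.sums_exist i hi
  have : setSum x (P.I i) = l := hl.limUnder_eq
  rw [this]; exact hl

lemma mI_mem {i : ℕ} (hi : i ∈ P.F) : mI x P i ∈ P.I i :=
  Nat.sInf_mem (P.I_nonempty i hi)

lemma mI_le {i j : ℕ} (hj : j ∈ P.I i) : mI x P i ≤ j := Nat.sInf_le hj

lemma MI_spec {i N : ℕ} (h : mI x P i < N) (hi : i ∈ P.F) :
    MI x P i N ∈ P.I i ∧ MI x P i N < N := by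
  have hne : (P.I i ∩ Set.Iio N).Nonempty := ⟨mI x P i, mI_mem hi, h⟩
  have hbdd : BddAbove (P.I i ∩ Set.Iio N) :=
    BddAbove.mono Set.inter_subset_right (bddAbove_Iio)
  have := Nat.sSup_mem hne hbdd
  exact ⟨this.1, this.2⟩

lemma le_MI {i N j : ℕ} (hj : j ∈ P.I i) (hjN : j < N) : j ≤ MI x P i N :=
  le_csSup (BddAbove.mono Set.inter_subset_right (bddAbove_Iio)) ⟨hj, hjN⟩

/-- The truncated interval, as an `Icc`. -/
lemma trunc_eq {i N : ℕ} (h : mI x P i < N) (hi : i ∈ P.F) :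
    (Finset.range N).filter (· ∈ P.I i) = Finset.Icc (mI x P i) (MI x P i N) := by
  obtain ⟨hM1, hM2⟩ := MI_spec h hi
  ext j
  simp only [Finset.mem_filter, Finset.mem_range, Finset.mem_Icc]
  constructor
  · rintro ⟨hjN, hjI⟩
    exact ⟨mI_le hjI, le_MI hjI hjN⟩
  · rintro ⟨h1, h2⟩
    refine ⟨lt_of_le_of_lt h2 hM2, ?_⟩
    exact (P.I_interval i hi).out (mI_mem hi) hM1 ⟨h1, h2⟩

lemma pS_eq_Icc {i N : ℕ} (h : mI x P i < N) (hi : i ∈ P.F) :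
    pS x P i N = ∑ k ∈ Finset.Icc (mI x P i) (MI x P i N), x k := by
  rw [pS, ← Finset.sum_filter, trunc_eq h hi]

/-- Fintype version of the estimate bound. -/
lemma sum_sq_le_fintype {ι : Type*} [Fintype ι] (hx : MemJ x) (g : ι → ℕ × ℕ)
    (hle : ∀ i, (g i).1 ≤ (g i).2)
    (hd : ∀ i j, i ≠ j → (g i).2 < (g j).1 ∨ (g j).2 < (g i).1) :
    ∑ i, (∑ k ∈ Finset.Icc (g i).1 (g i).2, x k) ^ 2 ≤ jamesNorm x ^ 2 := by
  classical
  let e := (Fintype.equivFin ι).symm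
  have := sum_sq_le_of_pairwise x hx (Fintype.card ι) (g ∘ e)
    (fun i => hle _) (fun i j hij => hd _ _ (fun h => hij (e.injective h)))
  rwa [Function.comp_def, Equiv.sum_comp e (fun i => (∑ k ∈ Finset.Icc (g i).1 (g i).2, x k) ^ 2)] at this

end Aux2

noncomputable section Aux3

variable {x : ℕ → ℝ} {P : NormingFamily x}

/-- The initial pieces of `P.F` as finsets. -/
def Fn (P : NormingFamily x) (n : ℕ) : Finset ℕ := (Finset.range n).filter (· ∈ P.F)

lemma Fn_mem {n i : ℕ} (hi : i ∈ Fn P n) : i ∈ P.F := (Finset.mem_filter.1 hi).2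

lemma tsum_b (h1 : jamesNorm x = 1) :
    ∑' i : ↥P.F, setSum x (P.I i) ^ 2 = 1 := by
  have := P.norming; rw [h1] at this; simpa using this

lemma summable_ind (h1 : jamesNorm x = 1) :
    Summable (Set.indicator P.F (fun i => setSum x (P.I i) ^ 2)) := by
  rw [← summable_subtype_iff_indicator]
  by_contra h
  have h0 := tsum_eq_zero_of_not_summable h
  have h1' := tsum_b (P := P) h1
  have h0' : ∑' i : ↥P.F, setSum x (P.I i) ^ 2 = 0 := h0
  exact one_ne_zero (h1'.symm.trans h0')

lemma sum_Fn_eq (n : ℕ) :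
    ∑ i ∈ Finset.range n, Set.indicator P.F (fun i => setSum x (P.I i) ^ 2) i
      = ∑ i ∈ Fn P n, setSum x (P.I i) ^ 2 := by
  rw [Fn, Finset.sum_filter]
  refine Finset.sum_congr rfl fun i _ => ?_
  simp [Set.indicator_apply]

lemma sum_Fn_le_one (h1 : jamesNorm x = 1) (n : ℕ) :
    ∑ i ∈ Fn P n, setSum x (P.I i) ^ 2 ≤ 1 := by
  rw [← sum_Fn_eq]
  have ht : ∑' i, Set.indicator P.F (fun i => setSum x (P.I i) ^ 2) i = 1 := by
    rw [← tsum_subtype]; exact tsum_b h1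
  calc ∑ i ∈ Finset.range n, Set.indicator P.F (fun i => setSum x (P.I i) ^ 2) i
      ≤ ∑' i, Set.indicator P.F (fun i => setSum x (P.I i) ^ 2) i :=
        Summable.sum_le_tsum _ (fun i _ => Set.indicator_nonneg (fun _ _ => sq_nonneg _) i)
          (summable_ind h1)
    _ = 1 := ht

lemma exists_Fn_close (h1 : jamesNorm x = 1) {ε : ℝ} (hε : 0 < ε) :
    ∃ n₀, 1 - ε < ∑ i ∈ Fn P n₀, setSum x (P.I i) ^ 2 := by
  have ht : ∑' i, Set.indicator P.F (fun i => setSum x (P.I i) ^ 2) i = 1 := by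
    rw [← tsum_subtype]; exact tsum_b h1
  have := (summable_ind (P := P) h1).hasSum.tendsto_sum_nat
  rw [ht] at this
  have hev := this.eventually (eventually_gt_nhds (by linarith : (1:ℝ) - ε < 1))
  obtain ⟨n₀, hn₀⟩ := hev.exists
  exact ⟨n₀, by rwa [sum_Fn_eq] at hn₀⟩

lemma gap_vs_interval {i a c A B : ℕ} (hi : i ∈ P.F) (hA : A ∈ P.I i) (hB : B ∈ P.I i)
    (hABle : A ≤ B) (hac : a ≤ c)
    (hgap : ∀ j ∈ Finset.Icc a c, j ∉ P.I i) : B < a ∨ c < A := by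
  by_contra h
  push_neg at h
  obtain ⟨h1, h2⟩ := h
  have ht : max a A ∈ P.I i :=
    (P.I_interval i hi).out hA hB ⟨le_max_right _ _, max_le h1 hABle⟩
  exact hgap (max a A) (Finset.mem_Icc.2 ⟨le_max_left _ _, max_le hac h2⟩) ht

lemma I_disjoint_lt {i j a b : ℕ} (hi : i ∈ P.F) (hj : j ∈ P.F) (hij : i < j)
    (ha : a ∈ P.I i) (hb : b ∈ P.I j) : a < b := P.ordered i hi j hj hij a ha b hb

/-- The gap lemma: an interval disjoint from all the intervals of the norming
family has zero sum. -/
lemma gap_sum (hx : MemJ x) (h1 : jamesNorm x = 1) {a c : ℕ}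
    (hgap : ∀ i ∈ P.F, ∀ j ∈ Finset.Icc a c, j ∉ P.I i) :
    ∑ j ∈ Finset.Icc a c, x j = 0 := by
  by_cases hac : a ≤ c
  swap
  · rw [Finset.Icc_eq_empty (fun h => hac h), Finset.sum_empty]
  set g := ∑ j ∈ Finset.Icc a c, x j with hg
  suffices hsq : ∀ ε > (0:ℝ), g ^ 2 ≤ ε by
    have h0 : g ^ 2 ≤ 0 := by
      by_contra hc
      push_neg at hc
      have := hsq (g ^ 2 / 2) (by linarith)
      linarith
    have : g ^ 2 = 0 := le_antisymm h0 (sq_nonneg g)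
    exact (pow_eq_zero_iff two_ne_zero).mp this
  intro ε hε
  obtain ⟨n₀, hn₀⟩ := exists_Fn_close (P := P) h1 hε
  set F₀ := Fn P n₀ with hF₀
  have hlim : Filter.Tendsto (fun N => ∑ i ∈ F₀, (pS x P i N) ^ 2 + g ^ 2)
      Filter.atTop (𝓝 (∑ i ∈ F₀, setSum x (P.I i) ^ 2 + g ^ 2)) := by
    refine Filter.Tendsto.add ?_ tendsto_const_nhds
    exact tendsto_finset_sum _ (fun i hi => (pS_tendsto (Fn_mem hi)).pow 2)
  have hev : ∀ᶠ N in Filter.atTop, ∑ i ∈ F₀, (pS x P i N) ^ 2 + g ^ 2 ≤ 1 := by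
    have hbnd : ∀ᶠ N in Filter.atTop, ∀ i ∈ F₀, mI x P i < N := by
      refine Filter.eventually_atTop.2 ⟨(F₀.sup (mI x P)) + 1, fun N hN i hi => ?_⟩
      exact lt_of_le_of_lt (Finset.le_sup hi) (lt_of_lt_of_le (Nat.lt_succ_self _) hN)
    filter_upwards [hbnd] with N hN
    classical
    set gI : (↥F₀ ⊕ Unit) → ℕ × ℕ :=
      Sum.elim (fun i => (mI x P (i:ℕ), MI x P (i:ℕ) N)) (fun _ => (a, c)) with hgI
    have hFm : ∀ i : ↥F₀, (i:ℕ) ∈ P.F := fun i => Fn_mem i.2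
    have hNm : ∀ i : ↥F₀, mI x P (i:ℕ) < N := fun i => hN _ i.2
    have hle : ∀ i, (gI i).1 ≤ (gI i).2 := by
      rintro (i | u)
      · exact le_MI (mI_mem (hFm i)) (hNm i)
      · exact hac
    have htrunc : ∀ i : ↥F₀, MI x P (i:ℕ) N ∈ P.I (i:ℕ) := fun i => (MI_spec (hNm i) (hFm i)).1
    have hd : ∀ i j, i ≠ j → (gI i).2 < (gI j).1 ∨ (gI j).2 < (gI i).1 := by
      rintro (i | u) (j | v) hij
      · have hne : (i:ℕ) ≠ (j:ℕ) := fun h => hij (by exact congrArg Sum.inl (Subtype.ext h))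
        rcases lt_or_gt_of_ne hne with h | h
        · exact Or.inl (I_disjoint_lt (hFm i) (hFm j) h (htrunc i) (mI_mem (hFm j)))
        · exact Or.inr (I_disjoint_lt (hFm j) (hFm i) h (htrunc j) (mI_mem (hFm i)))
      · rcases gap_vs_interval (hFm i) (mI_mem (hFm i)) (htrunc i) (hle (Sum.inl i)) hac
          (hgap _ (hFm i)) with h | h
        · exact Or.inl h
        · exact Or.inr h
      · rcases gap_vs_interval (hFm j) (mI_mem (hFm j)) (htrunc j) (hle (Sum.inl j)) hac
          (hgap _ (hFm j)) with h | h
        · exact Or.inr h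
        · exact Or.inl h
      · exact absurd rfl hij
    have hsum := sum_sq_le_fintype (x := x) hx gI hle hd
    rw [h1, one_pow, Fintype.sum_sum_type] at hsum
    simp only [hgI, Sum.elim_inl, Sum.elim_inr] at hsum
    have e1 : ∑ i : ↥F₀, (∑ k ∈ Finset.Icc (mI x P (i:ℕ)) (MI x P (i:ℕ) N), x k) ^ 2
        = ∑ i ∈ F₀, (pS x P i N) ^ 2 := by
      rw [← Finset.sum_coe_sort F₀ (fun i => (pS x P i N) ^ 2)]
      refine Finset.sum_congr rfl fun i _ => ?_
      rw [pS_eq_Icc (hNm i) (hFm i)]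
    rw [e1] at hsum
    simpa using hsum
  have hfin := le_of_tendsto hlim hev
  have hs1 : ∑ i ∈ F₀, setSum x (P.I i) ^ 2 ≤ 1 := sum_Fn_le_one h1 n₀
  linarith

/-- The runs lemma: the sum of `x` outside the union of the intervals vanishes on
any initial interval. -/
lemma runs_sum (hx : MemJ x) (h1 : jamesNorm x = 1) :
    ∀ c a : ℕ, ∑ j ∈ (Finset.Icc a c).filter (fun j => ∀ i ∈ P.F, j ∉ P.I i), x j = 0 := by
  classical
  intro c
  induction c using Nat.strong_induction_on with
  | _ c IH =>
    intro a
    set Q := (Finset.Icc a c).filter (fun j => ∀ i ∈ P.F, j ∉ P.I i) with hQ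
    by_cases hQne : Q.Nonempty
    swap
    · rw [Finset.not_nonempty_iff_eq_empty.1 hQne, Finset.sum_empty]
    set m := Q.max' hQne with hm
    have hmQ : m ∈ Q := Q.max'_mem hQne
    have hmIcc := (Finset.mem_filter.1 hmQ).1
    have ham : a ≤ m := (Finset.mem_Icc.1 hmIcc).1
    have hmc : m ≤ c := (Finset.mem_Icc.1 hmIcc).2
    have hmgap : ∀ i ∈ P.F, m ∉ P.I i := (Finset.mem_filter.1 hmQ).2
    -- Q has no elements above m
    have hQ_le_m : ∀ j ∈ Q, j ≤ m := fun j hj => Q.le_max' j hj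
    set R := (Finset.Icc a m).filter (fun j => ∃ i ∈ P.F, j ∈ P.I i) with hR
    by_cases hRne : R.Nonempty
    · set r := R.max' hRne with hr
      have hrR : r ∈ R := R.max'_mem hRne
      have hrIcc := (Finset.mem_filter.1 hrR).1
      have har : a ≤ r := (Finset.mem_Icc.1 hrIcc).1
      have hrm : r ≤ m := (Finset.mem_Icc.1 hrIcc).2
      have hrU : ∃ i ∈ P.F, r ∈ P.I i := (Finset.mem_filter.1 hrR).2
      have hrm' : r < m := by
        rcases lt_or_eq_of_le hrm with h | h
        · exact h
        · obtain ⟨i, hiF, hiI⟩ := hrU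
          exact absurd (h ▸ hiI) (hmgap i hiF)
      -- elements of (r, m] are all gaps
      have hrun_gap : ∀ j ∈ Finset.Icc (r+1) m, ∀ i ∈ P.F, j ∉ P.I i := by
        intro j hj i hiF hjI
        obtain ⟨hj1, hj2⟩ := Finset.mem_Icc.1 hj
        have : j ∈ R := Finset.mem_filter.2 ⟨Finset.mem_Icc.2 ⟨le_trans har (Nat.le_of_succ_le hj1), hj2⟩, ⟨i, hiF, hjI⟩⟩
        exact absurd (R.le_max' j this) (not_le.2 hj1)
      -- split Q
      have hsplit : Q = ((Finset.Icc a r).filter (fun j => ∀ i ∈ P.F, j ∉ P.I i)) ∪ Finset.Icc (r+1) m := by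
        ext j
        simp only [Finset.mem_union, Finset.mem_filter, Finset.mem_Icc, hQ]
        constructor
        · rintro ⟨⟨hja, hjc⟩, hjgap⟩
          by_cases hjr : j ≤ r
          · exact Or.inl ⟨⟨hja, hjr⟩, hjgap⟩
          · push_neg at hjr
            refine Or.inr ⟨hjr, ?_⟩
            exact hQ_le_m j (Finset.mem_filter.2 ⟨Finset.mem_Icc.2 ⟨hja, hjc⟩, hjgap⟩)
        · rintro (⟨⟨hja, hjr⟩, hjgap⟩ | ⟨hj1, hj2⟩)
          · exact ⟨⟨hja, le_trans hjr (le_trans hrm hmc)⟩, hjgap⟩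
          · exact ⟨⟨le_trans har (Nat.le_of_succ_le hj1), le_trans hj2 hmc⟩,
              hrun_gap j (Finset.mem_Icc.2 ⟨hj1, hj2⟩)⟩
      have hdisj : Disjoint ((Finset.Icc a r).filter (fun j => ∀ i ∈ P.F, j ∉ P.I i)) (Finset.Icc (r+1) m) := by
        refine Finset.disjoint_left.2 fun j hj hj' => ?_
        have h1' := (Finset.mem_Icc.1 (Finset.mem_filter.1 hj).1).2
        have h2' := (Finset.mem_Icc.1 hj').1
        omega
      rw [hsplit, Finset.sum_union hdisj, IH r (lt_of_lt_of_le hrm' hmc) a,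
        gap_sum hx h1 (fun i hi j hj => hrun_gap j hj i hi), add_zero]
    · -- whole [a, m] is a gap; Q = Icc a m
      have hgap_all : ∀ j ∈ Finset.Icc a m, ∀ i ∈ P.F, j ∉ P.I i := by
        intro j hj i hiF hjI
        exact hRne ⟨j, Finset.mem_filter.2 ⟨hj, ⟨i, hiF, hjI⟩⟩⟩
      have hQeq : Q = Finset.Icc a m := by
        ext j
        simp only [Finset.mem_filter, Finset.mem_Icc, hQ]
        constructor
        · rintro ⟨⟨hja, hjc⟩, hjgap⟩
          exact ⟨hja, hQ_le_m j (Finset.mem_filter.2 ⟨Finset.mem_Icc.2 ⟨hja, hjc⟩, hjgap⟩)⟩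
        · rintro ⟨hja, hjm⟩
          exact ⟨⟨hja, le_trans hjm hmc⟩, hgap_all j (Finset.mem_Icc.2 ⟨hja, hjm⟩)⟩
      rw [hQeq]
      exact gap_sum hx h1 (fun i hiF j hj => hgap_all j hj i hiF)

end Aux3

noncomputable section Aux4

variable {x : ℕ → ℝ} {P : NormingFamily x}

lemma I_pairwise_disjoint {i i' m : ℕ} (hi : i ∈ P.F) (hi' : i' ∈ P.F) (hne : i ≠ i')
    (hm : m ∈ P.I i) (hm' : m ∈ P.I i') : False := by
  rcases lt_or_gt_of_ne hne with h | h
  · exact lt_irrefl m (I_disjoint_lt hi hi' h hm hm')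
  · exact lt_irrefl m (I_disjoint_lt hi' hi h hm' hm)

/-- The central bound: sums of the interval sums over disjoint ordered convex blocks
of indices have square-sum at most 1. -/
lemma block_bound (hx : MemJ x) (h1 : jamesNorm x = 1) {n : ℕ} (T : Fin n → Finset ℕ)
    (hTF : ∀ j, ∀ i ∈ T j, i ∈ P.F)
    (hTconv : ∀ j, ∀ i1 ∈ T j, ∀ i2 ∈ T j, ∀ i ∈ P.F, i1 ≤ i → i ≤ i2 → i ∈ T j)
    (hTord : ∀ j j' : Fin n, j ≠ j' → ∀ i ∈ T j, ∀ i' ∈ T j', i ≠ i') :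
    ∑ j, (∑ i ∈ T j, setSum x (P.I i)) ^ 2 ≤ 1 := by
  classical
  set b := fun i => setSum x (P.I i) with hb
  set J : Finset (Fin n) := Finset.univ.filter (fun j => (T j).Nonempty) with hJ
  have hJmem : ∀ j ∈ J, (T j).Nonempty := fun j hj => (Finset.mem_filter.1 hj).2
  have hsum_eq : ∑ j, (∑ i ∈ T j, b i) ^ 2 = ∑ j ∈ J, (∑ i ∈ T j, b i) ^ 2 := by
    refine (Finset.sum_subset (Finset.subset_univ J) ?_).symm
    intro j _ hj
    have : T j = ∅ := by
      by_contra h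
      exact hj (Finset.mem_filter.2 ⟨Finset.mem_univ j, Finset.nonempty_of_ne_empty h⟩)
    rw [this, Finset.sum_empty]; exact zero_pow two_ne_zero
  rw [hsum_eq]
  -- block data
  set tmin : Fin n → ℕ := fun j => sInf (↑(T j) : Set ℕ) with htmin
  set tmax : Fin n → ℕ := fun j => sSup (↑(T j) : Set ℕ) with htmax
  have htmin_mem : ∀ j ∈ J, tmin j ∈ T j := fun j hj =>
    Nat.sInf_mem ((Finset.coe_nonempty).2 (hJmem j hj))
  have htmax_mem : ∀ j ∈ J, tmax j ∈ T j := fun j hj =>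
    Nat.sSup_mem ((Finset.coe_nonempty).2 (hJmem j hj)) (T j).finite_toSet.bddAbove
  have htmin_le : ∀ j, ∀ i ∈ T j, tmin j ≤ i := fun j i hi => Nat.sInf_le hi
  have hle_tmax : ∀ j, ∀ i ∈ T j, i ≤ tmax j := fun j i hi =>
    le_csSup (T j).finite_toSet.bddAbove hi
  -- blocks ordered
  have hblk : ∀ j ∈ J, ∀ j' ∈ J, j ≠ j' → tmax j < tmin j' ∨ tmax j' < tmin j := by
    intro j hj j' hj' hne
    have h1' := htmax_mem j hj
    have h2' := htmin_mem j' hj'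
    have h3' := htmax_mem j' hj'
    have h4' := htmin_mem j hj
    rcases lt_or_gt_of_ne (hTord j j' hne (tmax j) h1' (tmin j') h2') with h | h
    · left
      exact h
    · -- tmin j' < tmax j : show tmax j' < tmin j
      right
      by_contra hcon
      push_neg at hcon
      -- tmin j ≤ tmax j', and tmin j' < tmax j
      -- then blocks overlap: some common element
      -- tmin j' ∈ F, between tmin j and tmax j? cases
      rcases le_or_gt (tmin j) (tmin j') with hcase | hcase
      · have : tmin j' ∈ T j :=
          hTconv j _ h4' _ h1' _ (hTF j' _ h2') hcase h.le
        exact hTord j j' hne _ this _ h2' rfl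
      · have : tmin j ∈ T j' :=
          hTconv j' _ h2' _ h3' _ (hTF j _ h4') hcase.le hcon
        exact hTord j j' hne _ h4' _ this rfl
  set sEx : Fin n → Prop := fun j => ∃ s ∈ P.F, tmax j < s with hsEx
  set sj : Fin n → ℕ := fun j => sInf {s | s ∈ P.F ∧ tmax j < s} with hsj
  have hsj_spec : ∀ j, sEx j → sj j ∈ P.F ∧ tmax j < sj j := by
    intro j ⟨s, hs1, hs2⟩
    exact Nat.sInf_mem (⟨s, hs1, hs2⟩ : {s | s ∈ P.F ∧ tmax j < s}.Nonempty)
  have hsj_min : ∀ j, ∀ s' ∈ P.F, tmax j < s' → sj j ≤ s' := fun j s' h1' h2' =>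
    Nat.sInf_le ⟨h1', h2'⟩
  set A : Fin n → ℕ := fun j => mI x P (tmin j) with hA
  set B : Fin n → ℕ → ℕ := fun j N => if sEx j then mI x P (sj j) - 1 else N - 1 with hB
  -- geometry
  have geo1 : ∀ j ∈ J, ∀ i ∈ T j, ∀ m ∈ P.I i, A j ≤ m := by
    intro j hj i hi m hm
    rcases eq_or_lt_of_le (htmin_le j i hi) with h | h
    · rw [← h] at hm; exact mI_le hm
    · exact le_of_lt (I_disjoint_lt (hTF j _ (htmin_mem j hj)) (hTF j _ hi) h
        (mI_mem (hTF j _ (htmin_mem j hj))) hm)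
  have geo2 : ∀ j ∈ J, sEx j → ∀ i ∈ T j, ∀ m ∈ P.I i, m < mI x P (sj j) := by
    intro j hj hs i hi m hm
    obtain ⟨hsF, hslt⟩ := hsj_spec j hs
    exact I_disjoint_lt (hTF j _ hi) hsF (lt_of_le_of_lt (hle_tmax j i hi) hslt) hm
      (mI_mem hsF)
  have geo_pos : ∀ j ∈ J, sEx j → 1 ≤ mI x P (sj j) := by
    intro j hj hs
    have := geo2 j hj hs _ (htmax_mem j hj) _ (mI_mem (hTF j _ (htmax_mem j hj)))
    omega
  have geo3 : ∀ j ∈ J, ∀ N, 1 ≤ N → (sEx j → mI x P (sj j) ≤ N) →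
      ∀ i ∈ T j, ∀ m ∈ P.I i, ((A j ≤ m ∧ m ≤ B j N) ↔ m < N) := by
    intro j hj N hN1 hNs i hi m hm
    have hAm := geo1 j hj i hi m hm
    by_cases hs : sEx j
    · have h2 := geo2 j hj hs i hi m hm
      have hsN := hNs hs
      rw [hB]
      simp only [if_pos hs]
      constructor
      · intro _; omega
      · intro _; exact ⟨hAm, by omega⟩
    · rw [hB]; simp only [if_neg hs]
      constructor
      · intro h; omega
      · intro h; exact ⟨hAm, by omega⟩
  have geo4 : ∀ j ∈ J, ∀ N : ℕ, ∀ i', i' ∈ P.F → i' ∉ T j → ∀ m ∈ P.I i',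
      ¬(A j ≤ m ∧ m ≤ B j N) := by
    intro j hj N i' hi'F hi'T m hm
    have hi'cases : i' < tmin j ∨ tmax j < i' := by
      by_contra h
      push_neg at h
      exact hi'T (hTconv j _ (htmin_mem j hj) _ (htmax_mem j hj) i' hi'F h.1 h.2)
    rcases hi'cases with h | h
    · have : m < A j := I_disjoint_lt hi'F (hTF j _ (htmin_mem j hj)) h hm
        (mI_mem (hTF j _ (htmin_mem j hj)))
      omega
    · have hs : sEx j := ⟨i', hi'F, h⟩
      have hpos := geo_pos j hj hs
      obtain ⟨hsF, hslt⟩ := hsj_spec j hs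
      have hmge : mI x P (sj j) ≤ m := by
        rcases eq_or_lt_of_le (hsj_min j i' hi'F h) with he | hlt
        · rw [he]; exact mI_le hm
        · exact le_of_lt (I_disjoint_lt hsF hi'F hlt (mI_mem hsF) hm)
      rw [hB]; simp only [if_pos hs]
      omega
  have geo5 : ∀ j ∈ J, ∀ N, A j < N → A j ≤ B j N := by
    intro j hj N hN
    by_cases hs : sEx j
    · obtain ⟨hsF, hslt⟩ := hsj_spec j hs
      have hlt : tmin j < sj j :=
        lt_of_le_of_lt (htmin_le j _ (htmax_mem j hj)) hslt
      have hAlt : A j < mI x P (sj j) :=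
        I_disjoint_lt (hTF j _ (htmin_mem j hj)) hsF hlt
          (mI_mem (hTF j _ (htmin_mem j hj))) (mI_mem hsF)
      rw [hB]; simp only [if_pos hs]; omega
    · rw [hB]; simp only [if_neg hs]; omega
  have geo6 : ∀ j ∈ J, ∀ j' ∈ J, ∀ N, tmax j < tmin j' → B j N < A j' := by
    intro j hj j' hj' N hlt
    have htF' : tmin j' ∈ P.F := hTF j' _ (htmin_mem j' hj')
    have hs : sEx j := ⟨tmin j', htF', hlt⟩
    have hpos := geo_pos j hj hs
    obtain ⟨hsF, hslt⟩ := hsj_spec j hs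
    have hle' : mI x P (sj j) ≤ A j' := by
      rcases eq_or_lt_of_le (hsj_min j (tmin j') htF' hlt) with he | hlt2
      · show mI x P (sj j) ≤ mI x P (tmin j')
        rw [he]
      · exact le_of_lt (I_disjoint_lt hsF htF' hlt2 (mI_mem hsF) (mI_mem htF'))
    rw [hB]; simp only [if_pos hs]; omega
  have hull : ∀ j ∈ J, ∀ N, 1 ≤ N → (sEx j → mI x P (sj j) ≤ N) →
      ∑ m ∈ Finset.Icc (A j) (B j N), x m = ∑ i ∈ T j, pS x P i N := by
    intro j hj N hN1 hNs
    rw [← Finset.sum_filter_add_sum_filter_not (Finset.Icc (A j) (B j N))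
      (fun m => ∀ i ∈ P.F, m ∉ P.I i) x]
    rw [runs_sum hx h1 (B j N) (A j), zero_add]
    have hset : (Finset.Icc (A j) (B j N)).filter (fun m => ¬∀ i ∈ P.F, m ∉ P.I i)
        = (T j).biUnion (fun i => (Finset.range N).filter (· ∈ P.I i)) := by
      ext m
      simp only [Finset.mem_filter, Finset.mem_biUnion, Finset.mem_Icc, Finset.mem_range,
        not_forall, not_not, exists_prop]
      constructor
      · rintro ⟨⟨hm1, hm2⟩, i, hiF, hmi⟩
        have hiT : i ∈ T j := by
          by_contra hiT
          exact geo4 j hj N i hiF hiT m hmi ⟨hm1, hm2⟩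
        exact ⟨i, hiT, (geo3 j hj N hN1 hNs i hiT m hmi).1 ⟨hm1, hm2⟩, hmi⟩
      · rintro ⟨i, hiT, hmN, hmi⟩
        exact ⟨(geo3 j hj N hN1 hNs i hiT m hmi).2 hmN, i, hTF j i hiT, hmi⟩
    rw [hset, Finset.sum_biUnion ?_]
    · refine Finset.sum_congr rfl fun i _ => ?_
      rw [pS, Finset.sum_filter]
    · intro i hi i' hi' hne
      refine Finset.disjoint_left.2 fun m hm hm' => ?_
      have hmi := (Finset.mem_filter.1 hm).2
      have hmi' := (Finset.mem_filter.1 hm').2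
      exact I_pairwise_disjoint (hTF j i (Finset.mem_coe.1 hi)) (hTF j i' (Finset.mem_coe.1 hi'))
        hne hmi hmi'
  have hmax_le : ∀ j ∈ J, A j ≤ J.sup (fun j => max (A j) (if sEx j then mI x P (sj j) else 0)) := by
    intro j hj
    exact le_trans (le_max_left _ _)
      (Finset.le_sup (f := fun j => max (A j) (if sEx j then mI x P (sj j) else 0)) hj)
  have hmax_le2 : ∀ j ∈ J, sEx j →
      mI x P (sj j) ≤ J.sup (fun j => max (A j) (if sEx j then mI x P (sj j) else 0)) := by
    intro j hj hs
    refine le_trans ?_ (Finset.le_sup hj)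
    rw [if_pos hs]
    exact le_max_right _ _
  have htend : Filter.Tendsto (fun N => ∑ j ∈ J, (∑ i ∈ T j, pS x P i N) ^ 2)
      Filter.atTop (𝓝 (∑ j ∈ J, (∑ i ∈ T j, b i) ^ 2)) :=
    tendsto_finset_sum _ (fun j _ =>
      (tendsto_finset_sum _ (fun i hi => pS_tendsto (hTF j i hi))).pow 2)
  have hev : ∀ᶠ N in Filter.atTop, ∑ j ∈ J, (∑ i ∈ T j, pS x P i N) ^ 2 ≤ 1 := by
    refine Filter.eventually_atTop.2
      ⟨1 + J.sup (fun j => max (A j) (if sEx j then mI x P (sj j) else 0)), fun N hN => ?_⟩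
    have hN1 : 1 ≤ N := le_trans (Nat.le_add_right 1 _) hN
    have hjA : ∀ j ∈ J, A j < N := fun j hj => by have := hmax_le j hj; omega
    have hjs : ∀ j ∈ J, sEx j → mI x P (sj j) ≤ N := fun j hj hs => by
      have := hmax_le2 j hj hs; omega
    set gJ : ↥J → ℕ × ℕ := fun jj => (A jj.1, B jj.1 N) with hgJ
    have hle : ∀ jj : ↥J, (gJ jj).1 ≤ (gJ jj).2 := fun jj => geo5 _ jj.2 N (hjA _ jj.2)
    have hd : ∀ jj jj' : ↥J, jj ≠ jj' → (gJ jj).2 < (gJ jj').1 ∨ (gJ jj').2 < (gJ jj).1 := by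
      intro jj jj' hne
      have hne' : jj.1 ≠ jj'.1 := fun h => hne (Subtype.ext h)
      rcases hblk _ jj.2 _ jj'.2 hne' with h | h
      · exact Or.inl (geo6 _ jj.2 _ jj'.2 N h)
      · exact Or.inr (geo6 _ jj'.2 _ jj.2 N h)
    have hsum := sum_sq_le_fintype (x := x) hx gJ hle hd
    rw [h1, one_pow] at hsum
    calc ∑ j ∈ J, (∑ i ∈ T j, pS x P i N) ^ 2
        = ∑ jj : ↥J, (∑ m ∈ Finset.Icc (gJ jj).1 (gJ jj).2, x m) ^ 2 := by
          rw [← Finset.sum_coe_sort J (fun j => (∑ i ∈ T j, pS x P i N) ^ 2)]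
          refine Finset.sum_congr rfl fun jj _ => ?_
          rw [hull _ jj.2 N hN1 (hjs _ jj.2)]
      _ ≤ 1 := hsum
  exact le_of_tendsto htend hev

lemma self_le_k {k : ℕ → ℕ} (hk : StrictMonoOn k P.F) : ∀ i ∈ P.F, i ≤ k i := by
  intro i
  induction i with
  | zero => exact fun _ => Nat.zero_le _
  | succ i ih =>
    intro hi
    have hi' : i ∈ P.F := P.initial (Nat.le_succ i) hi
    have h2 := hk hi' hi (Nat.lt_succ_self i)
    have := ih hi'
    omega

lemma est_y_le_one (hx : MemJ x) (h1 : jamesNorm x = 1) {k : ℕ → ℕ}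
    (hk : StrictMonoOn k P.F)
    {y : ℕ → ℝ} (hy1 : ∀ i ∈ P.F, y (k i) = setSum x (P.I i))
    (hy2 : ∀ n : ℕ, (∀ i ∈ P.F, k i ≠ n) → y n = 0)
    (n : ℕ) (f : Fin n → ℕ × ℕ) (hf : Admissible n f) :
    ∑ j, (∑ m ∈ Finset.Icc (f j).1 (f j).2, y m) ^ 2 ≤ 1 := by
  classical
  set T : Fin n → Finset ℕ := fun j =>
    (Finset.range ((f j).2 + 1)).filter
      (fun i => i ∈ P.F ∧ (f j).1 ≤ k i ∧ k i ≤ (f j).2) with hT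
  have memT : ∀ j i, i ∈ T j ↔ (i ∈ P.F ∧ (f j).1 ≤ k i ∧ k i ≤ (f j).2) := by
    intro j i
    simp only [hT, Finset.mem_filter, Finset.mem_range]
    constructor
    · rintro ⟨_, h⟩; exact h
    · rintro ⟨h1', h2', h3'⟩
      refine ⟨?_, h1', h2', h3'⟩
      have := self_le_k hk i h1'
      omega
  have hblock : ∀ j, ∑ m ∈ Finset.Icc (f j).1 (f j).2, y m
      = ∑ i ∈ T j, setSum x (P.I i) := by
    intro j
    have himg : (T j).image k ⊆ Finset.Icc (f j).1 (f j).2 := by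
      intro m hm
      obtain ⟨i, hi, rfl⟩ := Finset.mem_image.1 hm
      obtain ⟨_, h2', h3'⟩ := (memT j i).1 hi
      exact Finset.mem_Icc.2 ⟨h2', h3'⟩
    have hzero : ∀ m ∈ Finset.Icc (f j).1 (f j).2, m ∉ (T j).image k → y m = 0 := by
      intro m hm hnm
      refine hy2 m (fun i hiF hkim => ?_)
      obtain ⟨h2', h3'⟩ := Finset.mem_Icc.1 hm
      exact hnm (Finset.mem_image.2 ⟨i, (memT j i).2 ⟨hiF, by omega, by omega⟩, hkim⟩)
    rw [← Finset.sum_subset himg hzero, Finset.sum_image ?_]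
    · exact Finset.sum_congr rfl fun i hi => hy1 i ((memT j i).1 hi).1
    · intro i hi i' hi' hkk
      exact hk.injOn ((memT j i).1 hi).1 ((memT j i').1 hi').1 hkk
  calc ∑ j, (∑ m ∈ Finset.Icc (f j).1 (f j).2, y m) ^ 2
      = ∑ j, (∑ i ∈ T j, setSum x (P.I i)) ^ 2 :=
        Finset.sum_congr rfl fun j _ => by rw [hblock j]
    _ ≤ 1 := by
        refine block_bound hx h1 T ?_ ?_ ?_
        · intro j i hi; exact ((memT j i).1 hi).1
        · intro j i1 h1' i2 h2' i hiF hle1 hle2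
          obtain ⟨hF1, ha1, hb1⟩ := (memT j i1).1 h1'
          obtain ⟨hF2, ha2, hb2⟩ := (memT j i2).1 h2'
          refine (memT j i).2 ⟨hiF, ?_, ?_⟩
          · exact le_trans ha1 (hk.monotoneOn hF1 hiF hle1)
          · exact le_trans (hk.monotoneOn hiF hF2 hle2) hb2
        · intro j j' hne i hi i' hi' heq
          obtain ⟨hF1, ha1, hb1⟩ := (memT j i).1 hi
          obtain ⟨hF2, ha2, hb2⟩ := (memT j' i').1 hi'
          subst heq
          rcases lt_or_gt_of_ne hne with h | h
          · have := hf.2 j j' h; omega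
          · have := hf.2 j' j h; omega

end Aux4
theorem stmt13 (x : ℕ → ℝ) (hx : MemJ x) (h1 : jamesNorm x = 1)
    (P : NormingFamily x) (k : ℕ → ℕ) (hk : StrictMonoOn k P.F)
    (y : ℕ → ℝ)
    (hy1 : ∀ i ∈ P.F, y (k i) = setSum x (P.I i))
    (hy2 : ∀ n : ℕ, (∀ i ∈ P.F, k i ≠ n) → y n = 0) :
    y ∈ Set.extremePoints ℝ ballJ := by
  classical
  have hest : ∀ (n : ℕ) (f : Fin n → ℕ × ℕ), Admissible n f →
      ∑ j, (∑ m ∈ Finset.Icc (f j).1 (f j).2, y m) ^ 2 ≤ 1 :=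
    fun n f hf => est_y_le_one hx h1 hk hy1 hy2 n f hf
  have hub : ∀ r ∈ estimates y, r ≤ 1 := by
    rintro r ⟨n, f, hf, rfl⟩
    calc Real.sqrt (∑ j, (∑ m ∈ Finset.Icc (f j).1 (f j).2, y m) ^ 2)
        ≤ Real.sqrt 1 := Real.sqrt_le_sqrt (hest n f hf)
      _ = 1 := Real.sqrt_one
  have hyMem : MemJ y := ⟨1, fun r hr => hub r hr⟩
  have hyNorm : jamesNorm y ≤ 1 := csSup_le ⟨0, zero_mem_estimates y⟩ hub
  have hky : Function.Injective (fun i : ↥P.F => k i) := by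
    intro a b hab
    exact Subtype.ext (hk.injOn a.2 b.2 hab)
  have hsupp : Function.support (fun n => y n ^ 2) ⊆ Set.range (fun i : ↥P.F => k i) := by
    intro m hm
    simp only [Function.mem_support] at hm
    have hym : y m ≠ 0 := fun h => hm (by rw [h]; ring)
    by_contra hr
    exact hym (hy2 m (fun i hiF hkim => hr ⟨⟨i, hiF⟩, hkim⟩))
  have hl2 : ∑' m, y m ^ 2 = 1 := by
    rw [← hky.tsum_eq hsupp]
    calc ∑' i : ↥P.F, y (k i) ^ 2 = ∑' i : ↥P.F, setSum x (P.I i) ^ 2 :=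
          tsum_congr fun i => by rw [hy1 i i.2]
      _ = 1 := tsum_b h1
  refine ⟨⟨hyMem, hyNorm⟩, ?_⟩
  rintro u ⟨huM, hu1⟩ v ⟨hvM, hv1⟩ hseg
  obtain ⟨a, b', ha, hb', hab, hy⟩ := hseg
  have hyn : ∀ m, y m = a * u m + b' * v m := by
    intro m
    rw [← hy]
    simp [Pi.add_apply, Pi.smul_apply, smul_eq_mul]
  have hu2 : Summable fun m => u m ^ 2 := summable_sq u huM
  have hv2 : Summable fun m => v m ^ 2 := summable_sq v hvM
  have hunn : (0:ℝ) ≤ jamesNorm u := jamesNorm_nonneg u huM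
  have hvnn : (0:ℝ) ≤ jamesNorm v := jamesNorm_nonneg v hvM
  have hu2' : ∑' m, u m ^ 2 ≤ 1 := le_trans (tsum_sq_le u huM) (by nlinarith)
  have hv2' : ∑' m, v m ^ 2 ≤ 1 := le_trans (tsum_sq_le v hvM) (by nlinarith)
  have hy2s : Summable fun m => y m ^ 2 := summable_sq y hyMem
  have hb'' : b' = 1 - a := by linarith
  set w := fun m => a * u m ^ 2 + b' * v m ^ 2 - y m ^ 2 with hw
  have hwnn : ∀ m, 0 ≤ w m := by
    intro m
    simp only [hw]
    rw [hyn m]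
    have hid : a * u m ^ 2 + b' * v m ^ 2 - (a * u m + b' * v m) ^ 2
        = a * b' * (u m - v m) ^ 2 := by rw [hb'']; ring
    rw [hid]
    positivity
  have hws : Summable w := ((hu2.mul_left a).add (hv2.mul_left b')).sub hy2s
  have htw0 : ∑' m, w m = 0 := by
    have h0 : ∑' m, w m
        = a * (∑' m, u m ^ 2) + b' * (∑' m, v m ^ 2) - ∑' m, y m ^ 2 := by
      simp only [hw]
      rw [Summable.tsum_sub ((hu2.mul_left a).add (hv2.mul_left b')) hy2s,
        Summable.tsum_add (hu2.mul_left a) (hv2.mul_left b'), tsum_mul_left, tsum_mul_left]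
    have h1' : ∑' m, w m ≤ 0 := by rw [h0, hl2]; nlinarith
    exact le_antisymm h1' (tsum_nonneg hwnn)
  have hwall : ∀ m, w m = 0 := by
    intro m
    have hle := hws.le_tsum m (fun j _ => hwnn j)
    rw [htw0] at hle
    exact le_antisymm hle (hwnn m)
  have huv : u = v := by
    funext m
    have h0 := hwall m
    simp only [hw] at h0
    rw [hyn m] at h0
    have hid : a * u m ^ 2 + b' * v m ^ 2 - (a * u m + b' * v m) ^ 2
        = a * b' * (u m - v m) ^ 2 := by rw [hb'']; ring
    rw [hid] at h0
    have habpos : 0 < a * b' := mul_pos ha hb'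
    have h3 : (u m - v m) ^ 2 = 0 := by
      rcases mul_eq_zero.1 h0 with h | h
      · exact absurd h (ne_of_gt habpos)
      · exact h
    have := (pow_eq_zero_iff two_ne_zero).1 h3
    linarith
  have hyu : u = y := by
    funext m
    calc u m = a * u m + b' * u m := by rw [← add_mul, hab, one_mul]
      _ = a * u m + b' * v m := by rw [huv]
      _ = y m := (hyn m).symm
  exact hyu
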